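/- For an alphabet A ⊆ U, a pair (X,Y) is an ⟨A,A⟩-model of a program P iff: (1) X = Y or X ⊊ Y∩A; (2) Y ⊨ P and for each Y' ⊊ Y, Y' ⊨ P^Y implies Y'∩A ⊊ Y∩A; and (3) if X ⊊ Y then there exists X' ⊆ Y with X'∩A = X such that X' ⊨ P^Y. (I.e., ⟨A,A⟩-models coincide with relativized A-SE-models.) -/
import Mathlib


structure Rule (α : Type*) where
  head : Finset α
  pbody : Finset α
  nbody : Finset α
deriving DecidableEq

abbrev Program (α : Type*) := Finset (Rule α)

variable {α : Type*} [DecidableEq α]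

/-- An interpretation `Y` satisfies a rule. -/
def satRule (Y : Finset α) (r : Rule α) : Prop :=
  r.pbody ⊆ Y → r.nbody ∩ Y = ∅ → (r.head ∩ Y).Nonempty

/-- `Y` is a model of the program `P`. -/
def satProg (Y : Finset α) (P : Program α) : Prop := ∀ r ∈ P, satRule Y r

/-- The Gelfond–Lifschitz reduct `P^Y`. -/
def reduct (P : Program α) (Y : Finset α) : Program α :=
  (P.filter (fun r => r.nbody ∩ Y = ∅)).image (fun r => ⟨r.head, r.pbody, ∅⟩)

/-- `Y` is an answer set of `P`: a minimal model of `P^Y`. -/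
def isAS (P : Program α) (Y : Finset α) : Prop :=
  satProg Y (reduct P Y) ∧ ∀ Z, Z ⊂ Y → ¬ satProg Z (reduct P Y)

def heads (P : Program α) : Finset α := P.biUnion Rule.head
def bodies (P : Program α) : Finset α := P.biUnion (fun r => r.pbody ∪ r.nbody)

/-- A positive program: no default negation. -/
def Positive (P : Program α) : Prop := ∀ r ∈ P, r.nbody = ∅

/-- A unary program: only facts `a ←` and rules `a ← b`. -/
def Unary (P : Program α) : Prop :=
  ∀ r ∈ P, r.nbody = ∅ ∧ r.head.card = 1 ∧ r.pbody.card ≤ 1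

/-- Membership in the class `C_⟨H,B⟩`. -/
def inClass (H B : Finset α) (P : Program α) : Prop := heads P ⊆ H ∧ bodies P ⊆ B

/-- `V ⪯_H^B Z`. -/
def preceq (H B V Z : Finset α) : Prop := V ∩ H ⊆ Z ∩ H ∧ Z ∩ B ⊆ V ∩ B

/-- `V ≺_H^B Z`. -/
def prec (H B V Z : Finset α) : Prop := preceq H B V Z ∧ V ∩ (H ∪ B) ≠ Z ∩ (H ∪ B)

/-- `Y` is an `H`-total model of `P`. -/
def Htotal (H : Finset α) (P : Program α) (Y : Finset α) : Prop :=
  satProg Y P ∧ ∀ Z, Z ⊂ Y → satProg Z (reduct P Y) → Z ∩ H ⊂ Y ∩ H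

/-- The containment `P ⊆_⟨H,B⟩ Q`. -/
def containsHB (H B : Finset α) (P Q : Program α) : Prop :=
  ∀ R : Program α, inClass H B R → ∀ Y, isAS (P ∪ R) Y → isAS (Q ∪ R) Y

/-- The equivalence `P ≡_⟨H,B⟩ Q`. -/
def equivHB (H B : Finset α) (P Q : Program α) : Prop :=
  ∀ R : Program α, inClass H B R → ∀ Y, isAS (P ∪ R) Y ↔ isAS (Q ∪ R) Y

/-- A witness against `P ⊆_⟨H,B⟩ Q`. -/
def Witness (H B : Finset α) (P Q : Program α) (X Y : Finset α) : Prop :=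
  X ⊆ Y ∧ Htotal H P Y ∧
    (satProg Y Q → X ⊂ Y ∧ satProg X (reduct Q Y) ∧
      ∀ X', preceq H B X X' → X' ⊂ Y → ¬ satProg X' (reduct P Y))

/-- `(X,Y)` is `⪯_H^B`-maximal for `P`. -/
def maximalHB (H B : Finset α) (P : Program α) (X Y : Finset α) : Prop :=
  satProg X (reduct P Y) ∧ ∀ X', prec H B X X' → X' ⊂ Y → ¬ satProg X' (reduct P Y)

/-- `(X,Y)` is an `⟨H,B⟩`-model of `P`. -/
def HBmodel (H B : Finset α) (P : Program α) (X Y : Finset α) : Prop :=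
  X ⊆ Y ∧ Htotal H P Y ∧
    (X ⊂ Y → ∃ X', X' ⊂ Y ∧ X' ∩ (H ∪ B) = X ∧ maximalHB H B P X' Y)

theorem AA_models_are_relativized_SE_models (A : Finset α) (P : Program α)
    (X Y : Finset α) :
    HBmodel A A P X Y ↔
      (X = Y ∨ X ⊂ Y ∩ A) ∧
      (satProg Y P ∧ ∀ Y', Y' ⊂ Y → satProg Y' (reduct P Y) → Y' ∩ A ⊂ Y ∩ A) ∧
      (X ⊂ Y → ∃ X' ⊆ Y, X' ∩ A = X ∧ satProg X' (reduct P Y)) := by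
  have hAA : A ∪ A = A := Finset.union_self A
  constructor
  · rintro ⟨hXY, hT, hmax⟩
    refine ⟨?_, hT, ?_⟩
    · rcases eq_or_ne X Y with h | h
      · exact Or.inl h
      · right
        obtain ⟨X', hX'Y, hX'A, hsat, _⟩ := hmax (by exact lt_of_le_of_ne hXY h)
        rw [hAA] at hX'A
        have := hT.2 X' hX'Y hsat
        rwa [hX'A] at this
    · intro hss
      obtain ⟨X', hX'Y, hX'A, hsat, _⟩ := hmax hss
      rw [hAA] at hX'A
      exact ⟨X', hX'Y.subset, hX'A, hsat⟩
  · rintro ⟨h1, hT, h3⟩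
    have hXY : X ⊆ Y := by
      rcases h1 with rfl | h
      · exact subset_rfl
      · exact h.subset.trans Finset.inter_subset_left
    refine ⟨hXY, hT, ?_⟩
    intro hss
    obtain ⟨X', hX'Y, hX'A, hsat⟩ := h3 hss
    have hne : X' ≠ Y := by
      rintro rfl
      rcases h1 with rfl | h
      · exact hss.ne rfl
      · rw [hX'A] at h
        exact h.ne rfl
    refine ⟨X', lt_of_le_of_ne hX'Y hne, by rw [hAA]; exact hX'A, hsat, ?_⟩
    rintro X'' ⟨⟨hsub1, hsub2⟩, hne'⟩ _ _
    apply hne'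
    rw [hAA]
    exact Finset.Subset.antisymm hsub1 hsub2
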